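/- Let Ā₁ = ℚ[x, y, z], let Ā₂ = ℚ[a, b, c, d]/(d² + c²(2b + a²)(a² − 4c)), and let B = ℚ[x, y]. Let π₁ : Ā₁ → B be the ℚ-algebra homomorphism with x ↦ x, y ↦ y, z ↦ 0, and let π₂ : Ā₂ → B be the ℚ-algebra homomorphism induced by a ↦ x, b ↦ 2y − x², c ↦ y, d ↦ −y(x² − 4y) (which kills the defining relation). Then the ℚ-algebra homomorphism from ℚ[K₁, K₂, G₂, G₃, Q] to the fiber product Ā₁ ×_B Ā₂ (taken along π₁ and π₂) determined by K₁ ↦ (x, ā), K₂ ↦ (2y − x², b̄), G₂ ↦ (y, c̄), G₃ ↦ (z, 0), Q ↦ (−y(x² − 4y), d̄) is surjective with kernel the ideal J generated by the three polynomials Q² + G₂²(2K₂ + K₁²)(K₁² − 4G₂), G₃·(−K₂ + 2G₂ − K₁²), and G₃·(Q + G₂(K₁² − 4G₂)); hence Ā₁ ×_B Ā₂ ≅ ℚ[K₁, K₂, G₂, G₃, Q]/J. -/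

import Mathlib

open MvPolynomial

namespace Stmt11

/-- `Ā₁ = ℚ[x, y, z]` with `x = X 0`, `y = X 1`, `z = X 2`. -/
abbrev A1 : Type := MvPolynomial (Fin 3) ℚ

/-- The defining relation `d² + c²(2b + a²)(a² − 4c)` of `Ā₂`,
with `a = X 0`, `b = X 1`, `c = X 2`, `d = X 3`. -/
noncomputable def rel : MvPolynomial (Fin 4) ℚ :=
  X 3 ^ 2 + X 2 ^ 2 * (2 * X 1 + X 0 ^ 2) * (X 0 ^ 2 - 4 * X 2)

/-- `Ā₂ = ℚ[a, b, c, d]/(d² + c²(2b + a²)(a² − 4c))`. -/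
abbrev A2 : Type := MvPolynomial (Fin 4) ℚ ⧸ Ideal.span {rel}

noncomputable def mk2 : MvPolynomial (Fin 4) ℚ →ₐ[ℚ] A2 :=
  Ideal.Quotient.mkₐ ℚ (Ideal.span {rel})

/-- `B = ℚ[x, y]` with `x = X 0`, `y = X 1`. -/
abbrev B : Type := MvPolynomial (Fin 2) ℚ

/-- `π₁ : Ā₁ → B`, `x ↦ x`, `y ↦ y`, `z ↦ 0`. -/
noncomputable def π₁ : A1 →ₐ[ℚ] B := aeval ![X 0, X 1, 0]

lemma aux : ∀ x ∈ Ideal.span {rel},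
    (aeval ![X 0, 2 * X 1 - X 0 ^ 2, X 1, -X 1 * (X 0 ^ 2 - 4 * X 1)] :
      MvPolynomial (Fin 4) ℚ →ₐ[ℚ] B) x = 0 := by
  intro x hx
  obtain ⟨c, rfl⟩ := Ideal.mem_span_singleton'.mp hx
  rw [map_mul]
  have h : (aeval ![X 0, 2 * X 1 - X 0 ^ 2, X 1, -X 1 * (X 0 ^ 2 - 4 * X 1)] :
      MvPolynomial (Fin 4) ℚ →ₐ[ℚ] B) rel = 0 := by
    simp only [rel, map_add, map_sub, map_mul, map_pow, map_ofNat, map_neg, aeval_X]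
    simp only [Matrix.cons_val_zero, Matrix.cons_val_one, Matrix.cons_val_two,
      Matrix.cons_val_three, Matrix.head_cons, Matrix.tail_cons]
    ring
  rw [h, mul_zero]

/-- `π₂ : Ā₂ → B`, induced by `a ↦ x`, `b ↦ 2y − x²`, `c ↦ y`, `d ↦ −y(x² − 4y)`
(which kills the defining relation). -/
noncomputable def π₂ : A2 →ₐ[ℚ] B :=
  Ideal.Quotient.liftₐ (Ideal.span {rel})
    (aeval ![X 0, 2 * X 1 - X 0 ^ 2, X 1, -X 1 * (X 0 ^ 2 - 4 * X 1)]) aux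

/-- The fiber product `Ā₁ ×_B Ā₂` along `π₁` and `π₂`, as a subring of `Ā₁ × Ā₂`. -/
noncomputable def F : Subring (A1 × A2) :=
  (π₁.toRingHom.comp (RingHom.fst A1 A2)).eqLocus (π₂.toRingHom.comp (RingHom.snd A1 A2))

/-- The homomorphism `ℚ[K₁, K₂, G₂, G₃, Q] → Ā₁ × Ā₂` determined by `K₁ ↦ (x, ā)`,
`K₂ ↦ (2y − x², b̄)`, `G₂ ↦ (y, c̄)`, `G₃ ↦ (z, 0)`, `Q ↦ (−y(x² − 4y), d̄)`
(with `K₁ = X 0`, `K₂ = X 1`, `G₂ = X 2`, `G₃ = X 3`, `Q = X 4`). -/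
noncomputable def Φ : MvPolynomial (Fin 5) ℚ →ₐ[ℚ] A1 × A2 :=
  aeval ![(X 0, mk2 (X 0)), (2 * X 1 - X 0 ^ 2, mk2 (X 1)), (X 1, mk2 (X 2)),
    (X 2, 0), (-X 1 * (X 0 ^ 2 - 4 * X 1), mk2 (X 3))]

/-- The ideal `J` generated by `Q² + G₂²(2K₂ + K₁²)(K₁² − 4G₂)`,
`G₃(−K₂ + 2G₂ − K₁²)` and `G₃(Q + G₂(K₁² − 4G₂))`. -/
noncomputable def J : Ideal (MvPolynomial (Fin 5) ℚ) :=
  Ideal.span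
    {X 4 ^ 2 + X 2 ^ 2 * (2 * X 1 + X 0 ^ 2) * (X 0 ^ 2 - 4 * X 2),
     X 3 * (-X 1 + 2 * X 2 - X 0 ^ 2),
     X 3 * (X 4 + X 2 * (X 0 ^ 2 - 4 * X 2))}

lemma mem_F {x : A1 × A2} : x ∈ F ↔ π₁ x.1 = π₂ x.2 := Iff.rfl

lemma π₂_mk2 (p : MvPolynomial (Fin 4) ℚ) : π₂ (mk2 p) =
    (aeval ![X 0, 2 * X 1 - X 0 ^ 2, X 1, -X 1 * (X 0 ^ 2 - 4 * X 1)] :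
      MvPolynomial (Fin 4) ℚ →ₐ[ℚ] B) p := rfl

lemma key : (π₁.comp ((AlgHom.fst ℚ A1 A2).comp Φ)) = (π₂.comp ((AlgHom.snd ℚ A1 A2).comp Φ)) := by
  apply MvPolynomial.algHom_ext
  intro i
  fin_cases i <;>
    simp [Φ, π₁, π₂_mk2, map_ofNat] <;> ring



noncomputable def α₁ : MvPolynomial (Fin 5) ℚ →ₐ[ℚ] A1 := (AlgHom.fst ℚ A1 A2).comp Φ
noncomputable def α₂ : MvPolynomial (Fin 5) ℚ →ₐ[ℚ] A2 := (AlgHom.snd ℚ A1 A2).comp Φ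
noncomputable def inc : B →ₐ[ℚ] A1 := aeval ![X 0, X 1]
noncomputable def lift45 : MvPolynomial (Fin 4) ℚ →ₐ[ℚ] MvPolynomial (Fin 5) ℚ :=
  aeval ![X 0, X 1, X 2, X 4]

lemma π₂_mk : π₂.comp mk2 =
    (aeval ![X 0, 2 * X 1 - X 0 ^ 2, X 1, -X 1 * (X 0 ^ 2 - 4 * X 1)] :
      MvPolynomial (Fin 4) ℚ →ₐ[ℚ] B) := by
  apply MvPolynomial.algHom_ext
  intro i
  fin_cases i <;>
    simp [π₂_mk2]

lemma α₂_lift45 : α₂.comp lift45 = mk2 := by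
  apply MvPolynomial.algHom_ext
  intro i
  fin_cases i <;>
    simp [α₂, lift45, Φ, mk2]

lemma α₁_lift45 : α₁.comp lift45 = inc.comp (π₂.comp mk2) := by
  rw [π₂_mk]
  apply MvPolynomial.algHom_ext
  intro i
  fin_cases i <;>
    simp [α₁, lift45, Φ, inc, mk2, map_ofNat] <;> ring

lemma embed3 : α₁.comp (aeval ![X 0, X 2, X 3] : MvPolynomial (Fin 3) ℚ →ₐ[ℚ] _) =
    AlgHom.id ℚ A1 := by
  apply MvPolynomial.algHom_ext
  intro i
  fin_cases i <;> simp [α₁, Φ]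

lemma X2_dvd (p : A1) : (X 2 : A1) ∣ (p - inc (π₁ p)) := by
  induction p using MvPolynomial.induction_on with
  | C a => simp [π₁, inc]
  | add p q hp hq =>
      have : p + q - inc (π₁ (p + q)) = (p - inc (π₁ p)) + (q - inc (π₁ q)) := by
        rw [map_add, map_add]; ring
      rw [this]; exact dvd_add hp hq
  | mul_X p i hp =>
      fin_cases i
      · show (X 2 : A1) ∣ p * X 0 - inc (π₁ (p * X 0))
        have : p * X 0 - inc (π₁ (p * X 0)) = (p - inc (π₁ p)) * X 0 := by
          simp [π₁, inc]; ring
        rw [this]; exact Dvd.dvd.mul_right hp _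
      · show (X 2 : A1) ∣ p * X 1 - inc (π₁ (p * X 1))
        have : p * X 1 - inc (π₁ (p * X 1)) = (p - inc (π₁ p)) * X 1 := by
          simp [π₁, inc]; ring
        rw [this]; exact Dvd.dvd.mul_right hp _
      · show (X 2 : A1) ∣ p * X 2 - inc (π₁ (p * X 2))
        have : p * X 2 - inc (π₁ (p * X 2)) = p * X 2 := by
          simp [π₁, inc]
        rw [this]; exact Dvd.dvd.mul_left dvd_rfl p

lemma F_le_range : ∀ x ∈ F, x ∈ Φ.toRingHom.range := by
  rintro ⟨p, q⟩ hx
  rw [mem_F] at hx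
  obtain ⟨q', rfl⟩ := Ideal.Quotient.mkₐ_surjective ℚ _ q
  replace hx : π₁ p = π₂ (mk2 q') := hx
  obtain ⟨r, hr⟩ := X2_dvd p
  refine ⟨lift45 q' + X 3 * aeval ![X 0, X 2, X 3] r, ?_⟩
  have h1 : α₁ (lift45 q') = inc (π₂ (mk2 q')) := by
    have := congrArg (fun f => f q') α₁_lift45; simpa using this
  have h2 : α₂ (lift45 q') = mk2 q' := by
    have := congrArg (fun f => f q') α₂_lift45; simpa using this
  have h3 : α₁ (aeval ![X 0, X 2, X 3] r) = r := by
    have := congrArg (fun f => f r) embed3; simpa using this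
  have hX3 : Φ (X 3) = ((X 2 : A1), (0 : A2)) := by simp [Φ]
  apply Prod.ext
  · show α₁ _ = p
    rw [map_add, map_mul, h1, h3]
    have h4 : α₁ (X 3) = X 2 := by simp [α₁, Φ]
    rw [h4, ← hx]
    linear_combination -hr
  · show α₂ _ = _
    rw [map_add, map_mul, h2]
    have h5 : α₂ (X 3) = 0 := by simp [α₂, Φ]
    rw [h5, zero_mul, add_zero]
    rfl

noncomputable def τ : MvPolynomial (Fin 5) ℚ →ₐ[ℚ] MvPolynomial (Fin 4) ℚ :=
  aeval ![X 0, X 1, X 2, 0, X 3]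

lemma α₂_eq : α₂ = mk2.comp τ := by
  apply MvPolynomial.algHom_ext
  intro i
  fin_cases i <;> simp [α₂, τ, Φ, mk2]

lemma g1_mem : (X 4 ^ 2 + X 2 ^ 2 * (2 * X 1 + X 0 ^ 2) * (X 0 ^ 2 - 4 * X 2)) ∈ J :=
  Ideal.subset_span (by simp)

lemma g2_mem : (X 3 * (-X 1 + 2 * X 2 - X 0 ^ 2)) ∈ J :=
  Ideal.subset_span (by simp)

lemma g3_mem : (X 3 * (X 4 + X 2 * (X 0 ^ 2 - 4 * X 2))) ∈ J :=
  Ideal.subset_span (by simp)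

lemma J_le_ker : J ≤ RingHom.ker Φ := by
  rw [J, Ideal.span_le]
  rintro x (rfl | rfl | rfl) <;> rw [SetLike.mem_coe, RingHom.mem_ker] <;>
      refine Prod.ext ?_ ?_
  · show α₁ _ = 0
    simp [α₁, Φ, map_ofNat]; try ring
  · show α₂ _ = 0
    rw [α₂_eq]
    have : τ (X 4 ^ 2 + X 2 ^ 2 * (2 * X 1 + X 0 ^ 2) * (X 0 ^ 2 - 4 * X 2)) = rel := by
      simp [τ, rel, map_ofNat]
    simp only [AlgHom.comp_apply, this, mk2, Ideal.Quotient.mkₐ_eq_mk]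
    exact Ideal.Quotient.eq_zero_iff_mem.mpr (Ideal.subset_span rfl)
  · show α₁ _ = 0
    simp [α₁, Φ, map_ofNat]; try ring
  · show α₂ _ = 0
    rw [α₂_eq]
    have : τ (X 3 * (-X 1 + 2 * X 2 - X 0 ^ 2)) = 0 := by
      simp [τ, map_ofNat]
    simp [AlgHom.comp_apply, this]
  · show α₁ _ = 0
    simp [α₁, Φ, map_ofNat]; try ring
  · show α₂ _ = 0
    rw [α₂_eq]
    have : τ (X 3 * (X 4 + X 2 * (X 0 ^ 2 - 4 * X 2))) = 0 := by
      simp [τ, map_ofNat]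
    simp [AlgHom.comp_apply, this]

noncomputable def ρ₀ : MvPolynomial (Fin 3) ℚ →ₐ[ℚ] MvPolynomial (Fin 5) ℚ :=
  aeval ![X 0, X 1, X 2]
noncomputable def ρ₁ : MvPolynomial (Fin 3) ℚ →ₐ[ℚ] MvPolynomial (Fin 5) ℚ :=
  aeval ![X 0, X 2, X 3]
noncomputable def σf : MvPolynomial (Fin 3) ℚ →ₐ[ℚ] MvPolynomial (Fin 3) ℚ :=
  aeval ![X 0, 2 * X 1 - X 0 ^ 2, X 1]

lemma L1 (h : MvPolynomial (Fin 3) ℚ) : X 3 * ρ₀ h - X 3 * ρ₁ (σf h) ∈ J := by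
  induction h using MvPolynomial.induction_on with
  | C a => simp [ρ₀, ρ₁, σf]
  | add p q hp hq =>
      have : X 3 * ρ₀ (p + q) - X 3 * ρ₁ (σf (p + q)) =
          (X 3 * ρ₀ p - X 3 * ρ₁ (σf p)) + (X 3 * ρ₀ q - X 3 * ρ₁ (σf q)) := by
        rw [map_add, map_add, map_add]; ring
      rw [this]; exact add_mem hp hq
  | mul_X p i hp =>
      fin_cases i
      · show X 3 * ρ₀ (p * X 0) - X 3 * ρ₁ (σf (p * X 0)) ∈ J
        have : X 3 * ρ₀ (p * X 0) - X 3 * ρ₁ (σf (p * X 0)) =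
            X 0 * (X 3 * ρ₀ p - X 3 * ρ₁ (σf p)) := by
          simp [ρ₀, ρ₁, σf]; ring
        rw [this]; exact J.mul_mem_left _ hp
      · show X 3 * ρ₀ (p * X 1) - X 3 * ρ₁ (σf (p * X 1)) ∈ J
        have : X 3 * ρ₀ (p * X 1) - X 3 * ρ₁ (σf (p * X 1)) =
            X 1 * (X 3 * ρ₀ p - X 3 * ρ₁ (σf p)) +
              (-ρ₁ (σf p)) * (X 3 * (-X 1 + 2 * X 2 - X 0 ^ 2)) := by
          simp [ρ₀, ρ₁, σf, map_ofNat]; ring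
        rw [this]; exact add_mem (J.mul_mem_left _ hp) (J.mul_mem_left _ g2_mem)
      · show X 3 * ρ₀ (p * X 2) - X 3 * ρ₁ (σf (p * X 2)) ∈ J
        have : X 3 * ρ₀ (p * X 2) - X 3 * ρ₁ (σf (p * X 2)) =
            X 2 * (X 3 * ρ₀ p - X 3 * ρ₁ (σf p)) := by
          simp [ρ₀, ρ₁, σf]; ring
        rw [this]; exact J.mul_mem_left _ hp

lemma normal (f : MvPolynomial (Fin 5) ℚ) :
    ∃ f₀ f₁ g : MvPolynomial (Fin 3) ℚ,
      f - (ρ₀ f₀ + X 4 * ρ₀ f₁ + X 3 * ρ₁ g) ∈ J := by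
  induction f using MvPolynomial.induction_on with
  | C a =>
      refine ⟨C a, 0, 0, ?_⟩
      simp [ρ₀, ρ₁]
  | add p q hp hq =>
      obtain ⟨a, b, c, hp⟩ := hp
      obtain ⟨a', b', c', hq⟩ := hq
      refine ⟨a + a', b + b', c + c', ?_⟩
      have : p + q - (ρ₀ (a + a') + X 4 * ρ₀ (b + b') + X 3 * ρ₁ (c + c')) =
          (p - (ρ₀ a + X 4 * ρ₀ b + X 3 * ρ₁ c)) +
            (q - (ρ₀ a' + X 4 * ρ₀ b' + X 3 * ρ₁ c')) := by
        simp only [map_add]; ring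
      rw [this]; exact add_mem hp hq
  | mul_X p i hp =>
      obtain ⟨a, b, c, hp⟩ := hp
      fin_cases i
      · refine ⟨a * X 0, b * X 0, c * X 0, ?_⟩
        show p * X 0 - (ρ₀ (a * X 0) + X 4 * ρ₀ (b * X 0) + X 3 * ρ₁ (c * X 0)) ∈ J
        have : p * X 0 - (ρ₀ (a * X 0) + X 4 * ρ₀ (b * X 0) + X 3 * ρ₁ (c * X 0)) =
            (p - (ρ₀ a + X 4 * ρ₀ b + X 3 * ρ₁ c)) * X 0 := by
          simp [ρ₀, ρ₁]; ring
        rw [this]; exact J.mul_mem_right _ hp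
      · refine ⟨a * X 1, b * X 1, c * (2 * X 1 - X 0 ^ 2), ?_⟩
        show p * X 1 - (ρ₀ (a * X 1) + X 4 * ρ₀ (b * X 1) +
            X 3 * ρ₁ (c * (2 * X 1 - X 0 ^ 2))) ∈ J
        have : p * X 1 - (ρ₀ (a * X 1) + X 4 * ρ₀ (b * X 1) +
            X 3 * ρ₁ (c * (2 * X 1 - X 0 ^ 2))) =
            (p - (ρ₀ a + X 4 * ρ₀ b + X 3 * ρ₁ c)) * X 1 +
              (-ρ₁ c) * (X 3 * (-X 1 + 2 * X 2 - X 0 ^ 2)) := by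
          simp [ρ₀, ρ₁, map_ofNat]; ring
        rw [this]; exact add_mem (J.mul_mem_right _ hp) (J.mul_mem_left _ g2_mem)
      · refine ⟨a * X 2, b * X 2, c * X 1, ?_⟩
        show p * X 2 - (ρ₀ (a * X 2) + X 4 * ρ₀ (b * X 2) + X 3 * ρ₁ (c * X 1)) ∈ J
        have : p * X 2 - (ρ₀ (a * X 2) + X 4 * ρ₀ (b * X 2) + X 3 * ρ₁ (c * X 1)) =
            (p - (ρ₀ a + X 4 * ρ₀ b + X 3 * ρ₁ c)) * X 2 := by
          simp [ρ₀, ρ₁]; ring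
        rw [this]; exact J.mul_mem_right _ hp
      · -- multiplication by X 3
        refine ⟨0, 0, σf a + σf (b * (-X 2 * (X 0 ^ 2 - 4 * X 2))) + c * X 2, ?_⟩
        show p * X 3 - (ρ₀ 0 + X 4 * ρ₀ 0 +
            X 3 * ρ₁ (σf a + σf (b * (-X 2 * (X 0 ^ 2 - 4 * X 2))) + c * X 2)) ∈ J
        have : p * X 3 - (ρ₀ 0 + X 4 * ρ₀ 0 +
            X 3 * ρ₁ (σf a + σf (b * (-X 2 * (X 0 ^ 2 - 4 * X 2))) + c * X 2)) =
            (p - (ρ₀ a + X 4 * ρ₀ b + X 3 * ρ₁ c)) * X 3 +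
              (X 3 * ρ₀ a - X 3 * ρ₁ (σf a)) +
              (X 3 * ρ₀ (b * (-X 2 * (X 0 ^ 2 - 4 * X 2))) -
                X 3 * ρ₁ (σf (b * (-X 2 * (X 0 ^ 2 - 4 * X 2))))) +
              ρ₀ b * (X 3 * (X 4 + X 2 * (X 0 ^ 2 - 4 * X 2))) := by
          simp only [map_add, map_mul, map_zero, map_neg, map_sub, map_pow, map_ofNat,
            ρ₀, ρ₁, aeval_X, Matrix.cons_val_zero, Matrix.cons_val_one, Matrix.cons_val_two,
            Matrix.cons_val_three, Matrix.head_cons, Matrix.tail_cons]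
          ring
        rw [this]
        exact add_mem (add_mem (add_mem (J.mul_mem_right _ hp) (L1 a)) (L1 _))
          (J.mul_mem_left _ g3_mem)
      · -- multiplication by X 4
        refine ⟨b * (-(X 2 ^ 2 * (2 * X 1 + X 0 ^ 2) * (X 0 ^ 2 - 4 * X 2))), a,
          c * (-X 1 * (X 0 ^ 2 - 4 * X 1)), ?_⟩
        show p * X 4 - (ρ₀ (b * (-(X 2 ^ 2 * (2 * X 1 + X 0 ^ 2) * (X 0 ^ 2 - 4 * X 2)))) +
            X 4 * ρ₀ a + X 3 * ρ₁ (c * (-X 1 * (X 0 ^ 2 - 4 * X 1)))) ∈ J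
        have : p * X 4 - (ρ₀ (b * (-(X 2 ^ 2 * (2 * X 1 + X 0 ^ 2) * (X 0 ^ 2 - 4 * X 2)))) +
            X 4 * ρ₀ a + X 3 * ρ₁ (c * (-X 1 * (X 0 ^ 2 - 4 * X 1)))) =
            (p - (ρ₀ a + X 4 * ρ₀ b + X 3 * ρ₁ c)) * X 4 +
              ρ₀ b * (X 4 ^ 2 + X 2 ^ 2 * (2 * X 1 + X 0 ^ 2) * (X 0 ^ 2 - 4 * X 2)) +
              ρ₁ c * (X 3 * (X 4 + X 2 * (X 0 ^ 2 - 4 * X 2))) := by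
          simp only [map_add, map_mul, map_zero, map_neg, map_sub, map_pow, map_ofNat,
            ρ₀, ρ₁, aeval_X, Matrix.cons_val_zero, Matrix.cons_val_one, Matrix.cons_val_two,
            Matrix.cons_val_three, Matrix.head_cons, Matrix.tail_cons]
          ring
        rw [this]
        exact add_mem (add_mem (J.mul_mem_right _ hp) (J.mul_mem_left _ g1_mem))
          (J.mul_mem_left _ g3_mem)

noncomputable def rn : MvPolynomial (Fin 3) ℚ →ₐ[ℚ] MvPolynomial (Fin 4) ℚ :=
  aeval ![X 0, X 1, X 2]

lemma τρ₀ : τ.comp ρ₀ = rn := by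
  apply MvPolynomial.algHom_ext
  intro i
  fin_cases i <;> simp [τ, ρ₀, rn]

noncomputable def E : MvPolynomial (Fin 4) ℚ ≃ₐ[ℚ] Polynomial (MvPolynomial (Fin 3) ℚ) :=
  (renameEquiv ℚ (Equiv.swap (0 : Fin 4) 3)).trans (MvPolynomial.finSuccEquiv ℚ 3)

noncomputable def θ : MvPolynomial (Fin 3) ℚ →ₐ[ℚ] MvPolynomial (Fin 3) ℚ :=
  aeval ![X 2, X 0, X 1]

lemma E_X0 : E (X 0) = Polynomial.C (X 2) := by
  have h3 : (3 : Fin 4) = Fin.succ 2 := rfl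
  simp [E, Equiv.swap_apply_of_ne_of_ne, h3, finSuccEquiv_X_succ]
  rw [h3, finSuccEquiv_X_succ]

lemma E_X1 : E (X 1) = Polynomial.C (X 0) := by
  have h1 : (1 : Fin 4) = Fin.succ 0 := rfl
  rw [E]
  simp only [AlgEquiv.trans_apply, renameEquiv_apply, rename_X]
  rw [Equiv.swap_apply_of_ne_of_ne (by decide) (by decide), h1, finSuccEquiv_X_succ]

lemma E_X2 : E (X 2) = Polynomial.C (X 1) := by
  have h2 : (2 : Fin 4) = Fin.succ 1 := rfl
  rw [E]
  simp only [AlgEquiv.trans_apply, renameEquiv_apply, rename_X]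
  rw [Equiv.swap_apply_of_ne_of_ne (by decide) (by decide), h2, finSuccEquiv_X_succ]

lemma E_X3 : E (X 3) = Polynomial.X := by
  rw [E]
  simp only [AlgEquiv.trans_apply, renameEquiv_apply, rename_X, Equiv.swap_apply_right]
  exact finSuccEquiv_X_zero

lemma E_rn : (E.toAlgHom.comp rn) = (Polynomial.CAlgHom (R := ℚ)).comp θ := by
  apply MvPolynomial.algHom_ext
  intro i
  fin_cases i <;>
    simp [rn, θ, Polynomial.CAlgHom, E_X0, E_X1, E_X2]

lemma E_rel : E rel = Polynomial.X ^ 2 +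
    Polynomial.C (X 1 ^ 2 * (2 * X 0 + X 2 ^ 2) * (X 2 ^ 2 - 4 * X 1)) := by
  simp only [rel, map_add, map_mul, map_pow, map_sub, map_ofNat, E_X0, E_X1, E_X2, E_X3]

noncomputable def θ' : MvPolynomial (Fin 3) ℚ →ₐ[ℚ] MvPolynomial (Fin 3) ℚ :=
  aeval ![X 1, X 2, X 0]

lemma θ'θ : θ'.comp θ = AlgHom.id ℚ (MvPolynomial (Fin 3) ℚ) := by
  apply MvPolynomial.algHom_ext
  intro i
  fin_cases i <;> simp [θ, θ']

lemma θ_inj {u : MvPolynomial (Fin 3) ℚ} (h : θ u = 0) : u = 0 := by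
  have := congrArg (fun f => f u) θ'θ
  simp only [AlgHom.comp_apply, AlgHom.id_apply] at this
  rw [← this, h, map_zero]

lemma d_deg {u v : MvPolynomial (Fin 3) ℚ} (h : rel ∣ rn u + X 3 * rn v) :
    u = 0 ∧ v = 0 := by
  have hu : E (rn u) = Polynomial.C (θ u) := by
    have := congrArg (fun f => f u) E_rn
    simpa [Polynomial.CAlgHom] using this
  have hv : E (rn v) = Polynomial.C (θ v) := by
    have := congrArg (fun f => f v) E_rn
    simpa [Polynomial.CAlgHom] using this
  have hE : E rel ∣ Polynomial.C (θ u) + Polynomial.X * Polynomial.C (θ v) := by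
    have := map_dvd E h
    rwa [map_add, map_mul, E_X3, hu, hv] at this
  have hP : Polynomial.C (θ u) + Polynomial.X * Polynomial.C (θ v) = 0 := by
    by_contra hne
    have hd := Polynomial.degree_le_of_dvd hE hne
    rw [E_rel, Polynomial.degree_X_pow_add_C (by norm_num)] at hd
    have hle : (Polynomial.C (θ u) + Polynomial.X * Polynomial.C (θ v)).degree ≤ 1 := by
      refine le_trans (Polynomial.degree_add_le _ _) (max_le ?_ ?_)
      · exact le_trans Polynomial.degree_C_le (by norm_num)
      · refine le_trans (Polynomial.degree_mul_le _ _) ?_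
        calc Polynomial.X.degree + (Polynomial.C (θ v)).degree ≤ 1 + 0 :=
              add_le_add Polynomial.degree_X_le Polynomial.degree_C_le
          _ = 1 := by norm_num
    have : (2 : WithBot ℕ) ≤ 1 := le_trans hd hle
    norm_num at this
  have hu0 : θ u = 0 := by
    have := congrArg (fun p => Polynomial.coeff p 0) hP
    simpa [Polynomial.coeff_X_mul] using this
  have hv0 : θ v = 0 := by
    have := congrArg (fun p => Polynomial.coeff p 1) hP
    simpa [Polynomial.coeff_X_mul, Polynomial.coeff_C] using this
  exact ⟨θ_inj hu0, θ_inj hv0⟩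

lemma ker_le_J : RingHom.ker Φ ≤ J := by
  intro f hf
  rw [RingHom.mem_ker] at hf
  obtain ⟨a, b, c, hN⟩ := normal f
  have hΦN : Φ (ρ₀ a + X 4 * ρ₀ b + X 3 * ρ₁ c) = 0 := by
    have hJ : Φ (f - (ρ₀ a + X 4 * ρ₀ b + X 3 * ρ₁ c)) = 0 :=
      J_le_ker hN
    have : Φ (ρ₀ a + X 4 * ρ₀ b + X 3 * ρ₁ c) =
        Φ f - Φ (f - (ρ₀ a + X 4 * ρ₀ b + X 3 * ρ₁ c)) := by
      rw [map_sub]; ring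
    rw [this, hf, hJ, sub_zero]
  -- second component
  have h2 : mk2 (rn a + X 3 * rn b) = 0 := by
    have hτρ : ∀ h, τ (ρ₀ h) = rn h := fun h => by
      have := congrArg (fun f => f h) τρ₀; simpa using this
    have hα₂ : α₂ (ρ₀ a + X 4 * ρ₀ b + X 3 * ρ₁ c) = 0 := by
      show ((Φ (ρ₀ a + X 4 * ρ₀ b + X 3 * ρ₁ c)).2 : A2) = 0
      rw [hΦN]; rfl
    rw [α₂_eq] at hα₂
    simp only [AlgHom.comp_apply, map_add, map_mul] at hα₂
    rw [hτρ a, hτρ b] at hα₂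
    have hτ4 : τ (X 4) = X 3 := by simp [τ]
    have hτ3 : τ (X 3) = 0 := by simp [τ]
    rw [hτ4, hτ3] at hα₂
    simp only [map_zero, zero_mul, add_zero, ← map_mul, ← map_add] at hα₂
    exact hα₂
  have hdvd : rel ∣ rn a + X 3 * rn b := by
    rw [mk2, Ideal.Quotient.mkₐ_eq_mk, Ideal.Quotient.eq_zero_iff_mem,
      Ideal.mem_span_singleton] at h2
    exact h2
  obtain ⟨ha, hb⟩ := d_deg hdvd
  -- first component
  have hc : c = 0 := by
    have h1 : α₁ (ρ₀ a + X 4 * ρ₀ b + X 3 * ρ₁ c) = 0 := by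
      show ((Φ (ρ₀ a + X 4 * ρ₀ b + X 3 * ρ₁ c)).1 : A1) = 0
      rw [hΦN]; rfl
    rw [ha, hb] at h1
    simp only [map_zero, map_add, map_mul, mul_zero, zero_add, add_zero] at h1
    have hα₁X3 : α₁ (X 3) = X 2 := by simp [α₁, Φ]
    have hα₁ρ₁ : α₁ (ρ₁ c) = c := by
      have := congrArg (fun f => f c) embed3
      simpa [ρ₁] using this
    rw [hα₁X3, hα₁ρ₁] at h1
    rcases mul_eq_zero.mp h1 with h | h
    · exact absurd h (X_ne_zero 2)
    · exact h
  rw [ha, hb, hc] at hN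
  simpa using hN


/-- `Φ` is surjective onto the fiber product `Ā₁ ×_B Ā₂` with kernel `J`; hence
`Ā₁ ×_B Ā₂ ≅ ℚ[K₁, K₂, G₂, G₃, Q]/J`. -/
theorem stmt11 :
    Φ.toRingHom.range = F ∧
    RingHom.ker Φ = J ∧
    Nonempty (F ≃+* (MvPolynomial (Fin 5) ℚ ⧸ J)) := by
  have hrange : Φ.toRingHom.range = F := by
    apply le_antisymm
    · rintro x ⟨y, rfl⟩
      have := congrArg (fun f => f y) key
      simpa [mem_F] using this
    · exact fun x hx => F_le_range x hx
  have hker : RingHom.ker Φ = J := le_antisymm ker_le_J J_le_ker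
  refine ⟨hrange, hker, ⟨?_⟩⟩
  exact (RingEquiv.subringCongr hrange.symm).trans
    ((RingHom.quotientKerEquivRange Φ.toRingHom).symm.trans (Ideal.quotEquivOfEq hker))


end Stmt11
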